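/- Let t ≥ 0 be real and w a nonzero complex number. If |arg w| ≤ π/2 then |1 + t/w| ≥ 1, and if π/2 < |arg w| < π then |1 + t/w| ≥ |sin(arg w)|. -/

import Mathlib

open Real Complex

/-- Key geometric inequality: for `t ≥ 0` and `w ≠ 0`, if `|arg w| ≤ π/2` then
`|1 + t/w| ≥ 1`, and if `π/2 < |arg w| < π` then `|1 + t/w| ≥ |sin(arg w)|`. -/
theorem one_add_div_bound
    (t : ℝ) (ht : 0 ≤ t) (w : ℂ) (hw : w ≠ 0) :
    (|Complex.arg w| ≤ π / 2 → 1 ≤ ‖1 + (t : ℂ) / w‖) ∧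
    (π / 2 < |Complex.arg w| → |Complex.arg w| < π →
      |Real.sin (Complex.arg w)| ≤ ‖1 + (t : ℂ) / w‖) := by
  have hwpos : 0 < ‖w‖ := norm_pos_iff.mpr hw
  have hrw : 1 + (t : ℂ) / w = (w + t) / w := by field_simp
  have hnorm : ‖1 + (t : ℂ) / w‖ = ‖w + t‖ / ‖w‖ := by
    rw [hrw]; simp [map_div₀]
  have hsq1 : (‖w + t‖)^2 = (w.re + t)^2 + w.im^2 := by
    rw [Complex.sq_norm, Complex.normSq_apply]; simp; ring
  have hsq2 : (‖w‖)^2 = w.re^2 + w.im^2 := by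
    rw [Complex.sq_norm, Complex.normSq_apply]; ring
  constructor
  · intro h
    have hre : 0 ≤ w.re := (Complex.abs_arg_le_pi_div_two_iff).mp h
    have hle : ‖w‖ ≤ ‖w + t‖ := by
      nlinarith [norm_nonneg (w + t), norm_nonneg w]
    rw [hnorm]
    rw [le_div_iff₀ hwpos]
    linarith
  · intro _ _
    have hsin : Real.sin (Complex.arg w) = w.im / ‖w‖ := Complex.sin_arg w
    have him : |w.im| ≤ ‖w + t‖ := by
      nlinarith [norm_nonneg (w + t), abs_nonneg w.im, _root_.sq_abs w.im]
    rw [hnorm, hsin, abs_div, abs_of_pos hwpos, div_le_div_iff₀ hwpos hwpos]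
    calc |w.im| * ‖w‖ ≤ ‖w + t‖ * ‖w‖ := by
          exact mul_le_mul_of_nonneg_right him hwpos.le
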